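/- Let n ≥ 2 and let a_1, …, a_n be positive real numbers with ∑_{i=1}^n √(a_i) = 1. Then there is exactly one rank-one matrix M in the standard simplex Δ^{nn−1} with m_{ii} = a_i for all i, namely the matrix with entries m_{ij} = √(a_i)·√(a_j). -/

import Mathlib

lemma minor_eq_aux {n : ℕ} (M : Matrix (Fin n) (Fin n) ℝ) (h : M.rank ≤ 1) :
    ∀ i j k l, M i j * M k l = M i l * M k j := by
  rw [Matrix.rank] at h
  obtain ⟨v₀, hv⟩ := finrank_le_one_iff.mp h
  have hcol : ∀ j, ∃ r : ℝ, ∀ i, M i j = r * (v₀ : Fin n → ℝ) i := by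
    intro j
    have hmem : (fun i => M i j) ∈ LinearMap.range M.mulVecLin := by
      refine ⟨Pi.single j 1, ?_⟩
      ext i
      simp [Matrix.mulVecLin_apply, Matrix.mulVec_single]
    obtain ⟨r, hr⟩ := hv ⟨_, hmem⟩
    refine ⟨r, fun i => ?_⟩
    have := congrFun (congrArg Subtype.val hr) i
    simpa using this.symm
  intro i j k l
  obtain ⟨rj, hj⟩ := hcol j
  obtain ⟨rl, hl⟩ := hcol l
  rw [hj, hl, hj, hl]; ring

/-- If `∑ √aᵢ = 1` with all `aᵢ > 0`, the unique rank-one matrix in the standard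
simplex with diagonal `a` is the matrix `(√aᵢ · √aⱼ)`. -/
theorem unique_completion_of_sum_sqrt_eq_one (n : ℕ) (hn : 2 ≤ n) (a : Fin n → ℝ)
    (ha : ∀ i, 0 < a i) (hsum : ∑ i, Real.sqrt (a i) = 1) :
    ∀ M : Matrix (Fin n) (Fin n) ℝ,
      ((∀ i j, 0 ≤ M i j) ∧ (∑ i, ∑ j, M i j = 1) ∧ M.rank = 1 ∧ ∀ i, M i i = a i) ↔
      M = Matrix.of fun i j => Real.sqrt (a i) * Real.sqrt (a j) := by
  have hn0 : 0 < n := by omega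
  intro M
  constructor
  · rintro ⟨hnn, hS, hrk, hdiag⟩
    have minor := minor_eq_aux M hrk.le
    set r : Fin n → ℝ := fun i => ∑ j, M i j with hr
    set c : Fin n → ℝ := fun j => ∑ i, M i j with hc
    have hM : ∀ i j, M i j = r i * c j := by
      intro i j
      have : M i j = M i j * ∑ k, ∑ l, M k l := by rw [hS, mul_one]
      rw [this, Finset.mul_sum]
      have : ∀ k, M i j * ∑ l, M k l = M k j * r i := by
        intro k
        rw [Finset.mul_sum, Finset.mul_sum]
        refine Finset.sum_congr rfl fun l _ => ?_
        rw [minor i j k l]; ring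
      rw [Finset.sum_congr rfl fun k _ => this k, ← Finset.sum_mul]
      exact mul_comm (c j) (r i)
    have hrsum : ∑ i, r i = 1 := hS
    have hcsum : ∑ j, c j = 1 := by
      rw [← hS, Finset.sum_comm]
    have hrnn : ∀ i, 0 ≤ r i := fun i => Finset.sum_nonneg fun j _ => hnn i j
    have hcnn : ∀ i, 0 ≤ c i := fun j => Finset.sum_nonneg fun i _ => hnn i j
    have hrc : ∀ i, r i * c i = a i := fun i => by rw [← hM i i, hdiag i]
    have hsq : ∀ i, Real.sqrt (a i) = Real.sqrt (r i) * Real.sqrt (c i) := by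
      intro i
      rw [← hrc i, Real.sqrt_mul (hrnn i)]
    have hterm : ∀ i, 0 ≤ (r i + c i) / 2 - Real.sqrt (a i) := by
      intro i
      rw [hsq i]
      have h2 : 0 ≤ (Real.sqrt (r i) - Real.sqrt (c i)) ^ 2 := sq_nonneg _
      have hr2 : Real.sqrt (r i) ^ 2 = r i := Real.sq_sqrt (hrnn i)
      have hc2 : Real.sqrt (c i) ^ 2 = c i := Real.sq_sqrt (hcnn i)
      nlinarith [h2, hr2, hc2]
    have hzero : ∑ i, ((r i + c i) / 2 - Real.sqrt (a i)) = 0 := by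
      rw [Finset.sum_sub_distrib, hsum]
      have : ∑ i, (r i + c i) / 2 = 1 := by
        rw [← Finset.sum_div, Finset.sum_add_distrib, hrsum, hcsum]
        norm_num
      rw [this]; ring
    have heach : ∀ i ∈ Finset.univ, ((r i + c i) / 2 - Real.sqrt (a i)) = 0 :=
      (Finset.sum_eq_zero_iff_of_nonneg fun i _ => hterm i).mp hzero
    have hreq : ∀ i, r i = Real.sqrt (a i) := by
      intro i
      have h0 := heach i (Finset.mem_univ i)
      rw [hsq i] at h0
      have hr2 : Real.sqrt (r i) ^ 2 = r i := Real.sq_sqrt (hrnn i)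
      have hc2 : Real.sqrt (c i) ^ 2 = c i := Real.sq_sqrt (hcnn i)
      have hsq0 : (Real.sqrt (r i) - Real.sqrt (c i)) ^ 2 = 0 := by nlinarith
      have heq : Real.sqrt (r i) = Real.sqrt (c i) := by
        have := pow_eq_zero_iff (n := 2) (by norm_num) |>.mp hsq0
        linarith
      calc r i = Real.sqrt (r i) ^ 2 := hr2.symm
        _ = Real.sqrt (r i) * Real.sqrt (c i) := by rw [heq]; ring
        _ = Real.sqrt (a i) := (hsq i).symm
    have hceq : ∀ i, c i = Real.sqrt (a i) := by
      intro i
      have h0 := heach i (Finset.mem_univ i)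
      have := hreq i
      linarith
    ext i j
    rw [Matrix.of_apply, hM i j, hreq i, hceq j]
  · rintro rfl
    refine ⟨fun i j => mul_nonneg (Real.sqrt_nonneg _) (Real.sqrt_nonneg _), ?_, ?_, ?_⟩
    · calc ∑ i, ∑ j, Real.sqrt (a i) * Real.sqrt (a j)
          = ∑ i, Real.sqrt (a i) * ∑ j, Real.sqrt (a j) := by
            refine Finset.sum_congr rfl fun i _ => ?_
            rw [Finset.mul_sum]
        _ = 1 := by rw [hsum]; simpa using hsum
    · set w : Fin n → ℝ := fun i => Real.sqrt (a i) with hw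
      have hw0 : w ≠ 0 := by
        intro h
        have := congrFun h ⟨0, hn0⟩
        simp only [hw, Pi.zero_apply] at this
        exact absurd this (Real.sqrt_ne_zero'.mpr (ha _))
      have hrange : LinearMap.range (Matrix.of fun i j => Real.sqrt (a i) * Real.sqrt (a j) :
          Matrix (Fin n) (Fin n) ℝ).mulVecLin = Submodule.span ℝ {w} := by
        apply le_antisymm
        · rintro y ⟨x, rfl⟩
          have : (Matrix.of fun i j => Real.sqrt (a i) * Real.sqrt (a j)).mulVecLin x
              = (∑ j, Real.sqrt (a j) * x j) • w := by
            ext i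
            simp only [Matrix.mulVecLin_apply, Matrix.mulVec, dotProduct, Matrix.of_apply,
              Pi.smul_apply, smul_eq_mul, hw, Finset.sum_mul]
            refine Finset.sum_congr rfl fun j _ => ?_
            ring
          rw [this]
          exact Submodule.smul_mem _ _ (Submodule.mem_span_singleton_self w)
        · rw [Submodule.span_le, Set.singleton_subset_iff]
          refine ⟨Pi.single ⟨0, hn0⟩ ((Real.sqrt (a ⟨0, hn0⟩))⁻¹), ?_⟩
          ext i
          simp only [Matrix.mulVecLin_apply, Matrix.mulVec_single, Matrix.of_apply, hw]
          simp only [Pi.smul_apply, Matrix.col_apply, Matrix.of_apply, op_smul_eq_mul]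
          rw [mul_assoc, mul_inv_cancel₀ (Real.sqrt_ne_zero'.mpr (ha _)), mul_one]
      rw [Matrix.rank, hrange, finrank_span_singleton hw0]
    · intro i
      rw [Matrix.of_apply, Real.mul_self_sqrt (ha i).le]
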